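/- The point E_c = (N_c, W_c) with N_c = W♯(1 − (β_N/ρ_N)(N♯ − W♯)) and W_c = W♯(β_N/ρ_N)(N♯ − W♯) satisfies F(N_c, W_c) = 0 and G(N_c, W_c) = 0, where F and G are the right-hand sides of the Wolbachia system; moreover N_c + W_c = W♯. -/

import Mathlib

theorem stmt_4 (ρN ρW αN αW βN βW : ℝ)
    (hρN : 0 < ρN) (hρW : 0 < ρW) (hαN : 0 < αN) (hαW : 0 < αW)
    (hβN : 0 < βN) (hβW : 0 < βW)
    (hsN : αN < ρN) (hsW : αW < ρW)
    (Nsharp Wsharp Nc Wc : ℝ)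
    (hNs : Nsharp = (ρN - αN) / βN) (hWs : Wsharp = (ρW - αW) / βW)
    (hgap : 0 < Nsharp - Wsharp)
    (hlt : βN / ρN * (Nsharp - Wsharp) < 1)
    (hNc : Nc = Wsharp * (1 - βN / ρN * (Nsharp - Wsharp)))
    (hWc : Wc = Wsharp * (βN / ρN * (Nsharp - Wsharp))) :
    ρN * Nc^2 / (Nc + Wc) - αN * Nc - βN * Nc * (Nc + Wc) = 0 ∧
    ρW * Wc - αW * Wc - βW * Wc * (Nc + Wc) = 0 ∧
    Nc + Wc = Wsharp := by
  have hWpos : 0 < Wsharp := by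
    rw [hWs]; exact div_pos (by linarith) hβW
  have hsum : Nc + Wc = Wsharp := by
    rw [hNc, hWc]; ring
  have hβNs : βN * Nsharp = ρN - αN := by
    rw [hNs]; field_simp
  have hβWs : βW * Wsharp = ρW - αW := by
    rw [hWs]; field_simp
  have h1 : ρN * Nc = Wsharp * (αN + βN * Wsharp) := by
    rw [hNc]
    field_simp
    linear_combination -hβNs
  refine ⟨?_, ?_, hsum⟩
  · rw [hsum]
    field_simp
    linear_combination Nc * h1
  · rw [hsum]
    linear_combination -Wc * hβWs
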